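/- Let S be an (M,λ,ε)-minimizing set with λ > 1, 0 ≤ ε < λ−1, and let [u] ∈ S. If τ_1, …, τ_k ∈ W_N are Whitehead moves such that ‖u‖_A > ‖τ_1(u)‖_A > ‖τ_2τ_1(u)‖_A > … > ‖τ_k···τ_1(u)‖_A, then k ≤ M−1 and τ_i···τ_1([u]) ∈ S for i = 1, …, k. -/
import Mathlib


/-- `(M,λ,ε)`-minimizing set, in the abstract model where `G = Out(F_N)` acts
on the set `C` of conjugacy classes and `len = ‖·‖_A`. -/
def IsMinimizingSet (G : Type*) {C : Type*} [Group G] [MulAction G C]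
    (len : C → ℕ) (M : ℕ) (lam eps : ℝ) (S : Finset C) : Prop :=
  (∀ u ∈ S, 0 < len u) ∧
  S.card ≤ M ∧
  (∀ u ∈ S, ∀ u' ∈ S, ∃ φ : G, φ • u = u') ∧
  (∀ u ∈ S, ∀ u' ∈ S,
      (1 - eps) * (len u : ℝ) ≤ (len u' : ℝ) ∧ (len u' : ℝ) ≤ (1 + eps) * (len u : ℝ)) ∧
  (∀ u ∈ S, ∀ φ : G, φ • u ∉ S → lam * (len u : ℝ) ≤ (len (φ • u) : ℝ))

/-- if `S` is `(M,λ,ε)`-minimizing, `[u] ∈ S`, and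
`τ_1,…,τ_k ∈ W_N` are Whitehead moves whose successive partial applications
`c i = τ_i⋯τ_1([u])` strictly decrease the length, then `k ≤ M - 1` and all
the classes `c 1, …, c k` lie in `S`. -/
theorem stmt4 {G C : Type*} [Group G] [MulAction G C] (W : Set G)
    (len : C → ℕ) (M : ℕ) (lam eps : ℝ)
    (hM : 1 ≤ M) (hlam : 1 < lam) (heps0 : 0 ≤ eps) (heps : eps < lam - 1)
    (S : Finset C) (hS : IsMinimizingSet G len M lam eps S)
    (u : C) (hu : u ∈ S)
    (k : ℕ) (τ : ℕ → G) (hτ : ∀ i < k, τ i ∈ W)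
    (c : ℕ → C) (hc0 : c 0 = u)
    (hstep : ∀ i < k, c (i + 1) = τ i • c i)
    (hdec : ∀ i < k, len (c (i + 1)) < len (c i)) :
    k ≤ M - 1 ∧ ∀ i, 1 ≤ i → i ≤ k → c i ∈ S := by
  classical
  obtain ⟨hpos, hcard, -, -, hmin⟩ := hS
  -- all partial images lie in S
  have hmem : ∀ i, i ≤ k → c i ∈ S := by
    intro i
    induction i with
    | zero => intro _; rw [hc0]; exact hu
    | succ n ih =>
      intro hn
      have hnk : n < k := hn
      have hcn : c n ∈ S := ih (Nat.le_of_lt hnk)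
      by_contra hns
      have hstep' := hstep n hnk
      have hns' : τ n • c n ∉ S := by rwa [hstep'] at hns
      have h1 : lam * (len (c n) : ℝ) ≤ (len (τ n • c n) : ℝ) := hmin _ hcn _ hns'
      have h2 : len (c (n + 1)) < len (c n) := hdec n hnk
      rw [hstep'] at h2
      have hlt : (len (τ n • c n) : ℝ) < (len (c n) : ℝ) := by exact_mod_cast h2
      have hp : (0 : ℝ) < (len (c n) : ℝ) := by exact_mod_cast hpos _ hcn
      nlinarith
  -- lengths strictly decrease, so the c i are distinct
  have hanti : ∀ i j, i < j → j ≤ k → len (c j) < len (c i) := by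
    intro i j hij hjk
    induction j with
    | zero => omega
    | succ n ih =>
      rcases Nat.lt_or_ge i n with h | h
      · exact lt_trans (hdec n hjk) (ih h (Nat.le_of_lt hjk))
      · have : i = n := by omega
        subst this
        exact hdec i hjk
  have hinj : Set.InjOn c (Finset.range (k + 1)) := by
    intro i hi j hj hij
    simp only [Finset.coe_range, Set.mem_Iio] at hi hj
    by_contra hne
    rcases Nat.lt_or_ge i j with h | h
    · exact absurd (hanti i j h (by omega)) (by rw [hij]; omega)
    · have h' : j < i := by omega
      exact absurd (hanti j i h' (by omega)) (by rw [hij]; omega)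
  have hsub : (Finset.range (k + 1)).image c ⊆ S := by
    intro x hx
    obtain ⟨i, hi, rfl⟩ := Finset.mem_image.mp hx
    exact hmem i (by simpa using Nat.lt_succ_iff.mp (Finset.mem_range.mp hi))
  have hcard' : k + 1 ≤ S.card := by
    have := Finset.card_le_card hsub
    rwa [Finset.card_image_of_injOn hinj, Finset.card_range] at this
  exact ⟨by omega, fun i _ hik => hmem i hik⟩
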